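/- Let d, n, L, W ∈ ℕ with n ≥ 1, L ≥ 2, W ≥ 1, and R ≥ 1 a real number. Let σ : ℝ → ℝ be n-times continuously differentiable with ‖σ‖_{C^n} := max_{0 ≤ j ≤ n} sup_{s ∈ ℝ} |σ^{(j)}(s)| finite and ≥ 1. Let u_θ : ℝ^{d+1} → ℝ^{l_L} be a depth-L neural network u_θ = A_L ∘ (σ ∘ A_{L−1}) ∘ ⋯ ∘ (σ ∘ A₁), where each A_i : ℝ^{l_{i−1}} → ℝ^{l_i} is an affine map with l₀ = d+1, all widths l_i ≤ W, all matrix entries and bias entries lying in [−R, R], and σ applied componentwise. Then for every component index 1 ≤ j ≤ l_L, every multi-index α ∈ ℕ^{d+1} with |α| ≤ n, and every x ∈ [0,1]^{d+1}: |D^α (u_θ)_j(x)| ≤ 16^L (d+1)^{2n} (e² n⁴ W³ R^n ‖σ‖_{C^n})^{nL}. -/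

import Mathlib

open MeasureTheory Set

noncomputable section

/-- Partial derivative in the `i`-th coordinate direction. -/
def pdPi {m : ℕ} (i : Fin m) (g : (Fin m → ℝ) → ℝ) : (Fin m → ℝ) → ℝ :=
  fun x => fderiv ℝ g x (Pi.single i 1)

/-- Multi-index (classical) partial derivative `D^α g`. -/
def mderivPi {m : ℕ} (α : Fin m → ℕ) (g : (Fin m → ℝ) → ℝ) : (Fin m → ℝ) → ℝ :=
  (List.finRange m).foldr (fun i h => (pdPi i)^[α i] h) g

/-- Forward pass through the first `k` layers of a feedforward network, with the
activation `σ` applied componentwise after each affine layer: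
`fwd σ l A b k = (σ ∘ A_k) ∘ ⋯ ∘ (σ ∘ A₁)`. -/
def fwd (σ : ℝ → ℝ) (l : ℕ → ℕ)
    (A : ∀ i : ℕ, Matrix (Fin (l (i + 1))) (Fin (l i)) ℝ)
    (b : ∀ i : ℕ, Fin (l (i + 1)) → ℝ) :
    (k : ℕ) → (Fin (l 0) → ℝ) → (Fin (l k) → ℝ)
  | 0 => fun x => x
  | k + 1 => fun x j => σ ((A k).mulVec (fwd σ l A b k x) j + b k j)

namespace DeepAux

lemma pd_step {m : ℕ} {g : (Fin m → ℝ) → ℝ} {k : ℕ} {M : ℝ} (i : Fin m)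
    (hg : ContDiff ℝ (k + 1) g)
    (hb : ∀ j ≤ k + 1, ∀ x, ‖iteratedFDeriv ℝ j g x‖ ≤ M) :
    ContDiff ℝ k (pdPi i g) ∧
      ∀ j ≤ k, ∀ x, ‖iteratedFDeriv ℝ j (pdPi i g) x‖ ≤ M := by
  have hcast : ((k : WithTop ℕ∞) + 1) ≤ ((k + 1 : ℕ) : WithTop ℕ∞) := by
    push_cast; exact le_rfl
  have hf : ContDiff ℝ k (fderiv ℝ g) := hg.fderiv_right hcast
  constructor
  · exact hf.clm_apply contDiff_const
  · intro j hj x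
    have h1 : ‖iteratedFDeriv ℝ j (fun y => (fderiv ℝ g y) (Pi.single i 1)) x‖
        ≤ ‖(Pi.single i (1:ℝ) : Fin m → ℝ)‖ * ‖iteratedFDeriv ℝ j (fderiv ℝ g) x‖ :=
      norm_iteratedFDeriv_clm_apply_const hf.contDiffAt (by exact_mod_cast hj)
    have h3 : ‖(Pi.single i (1:ℝ) : Fin m → ℝ)‖ = 1 := by
      rw [Pi.norm_single]; exact norm_one
    calc ‖iteratedFDeriv ℝ j (pdPi i g) x‖
        ≤ ‖(Pi.single i (1:ℝ) : Fin m → ℝ)‖ * ‖iteratedFDeriv ℝ j (fderiv ℝ g) x‖ := h1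
      _ = ‖iteratedFDeriv ℝ (j + 1) g x‖ := by
          rw [h3, one_mul, norm_iteratedFDeriv_fderiv]
      _ ≤ M := hb (j + 1) (by omega) x

lemma pd_iter {m : ℕ} {M : ℝ} (i : Fin m) :
    ∀ (c k : ℕ) (g : (Fin m → ℝ) → ℝ), ContDiff ℝ ((k + c : ℕ) : WithTop ℕ∞) g →
      (∀ j ≤ k + c, ∀ x, ‖iteratedFDeriv ℝ j g x‖ ≤ M) →
      ContDiff ℝ k ((pdPi i)^[c] g) ∧
        ∀ j ≤ k, ∀ x, ‖iteratedFDeriv ℝ j ((pdPi i)^[c] g) x‖ ≤ M := by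
  intro c
  induction c with
  | zero => intro k g hg hb; simpa using ⟨hg, hb⟩
  | succ c ih =>
    intro k g hg hb
    rw [Function.iterate_succ_apply]
    have hg' : ContDiff ℝ (((k + c) + 1 : ℕ) : WithTop ℕ∞) g := by
      rw [show (k + c) + 1 = k + (c + 1) from by omega]; exact hg
    have hb' : ∀ j ≤ (k + c) + 1, ∀ x, ‖iteratedFDeriv ℝ j g x‖ ≤ M := by
      intro j hj x; exact hb j (by omega) x
    have hstep := pd_step i (k := k + c) hg' hb'
    exact ih k (pdPi i g) hstep.1 hstep.2

lemma pd_fold {m : ℕ} {M : ℝ} :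
    ∀ (s : List (Fin m)) (α : Fin m → ℕ) (k : ℕ) (g : (Fin m → ℝ) → ℝ),
      ContDiff ℝ ((k + (s.map α).sum : ℕ) : WithTop ℕ∞) g →
      (∀ j ≤ k + (s.map α).sum, ∀ x, ‖iteratedFDeriv ℝ j g x‖ ≤ M) →
      ContDiff ℝ k (s.foldr (fun i h => (pdPi i)^[α i] h) g) ∧
        ∀ j ≤ k, ∀ x,
          ‖iteratedFDeriv ℝ j (s.foldr (fun i h => (pdPi i)^[α i] h) g) x‖ ≤ M := by
  intro s
  induction s with
  | nil => intro α k g hg hb; simpa using ⟨hg, hb⟩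
  | cons i s ih =>
    intro α k g hg hb
    simp only [List.foldr_cons]
    simp only [List.map_cons, List.sum_cons] at hg hb
    rw [show k + (α i + (List.map α s).sum) = (k + α i) + (List.map α s).sum from by omega]
      at hg
    have hb' : ∀ j ≤ (k + α i) + (List.map α s).sum, ∀ x,
        ‖iteratedFDeriv ℝ j g x‖ ≤ M := fun j hj x => hb j (by omega) x
    have hrec := ih α (k + α i) g hg hb'
    exact pd_iter i (α i) k _ hrec.1 hrec.2

lemma mderiv_bound {m n : ℕ} {M : ℝ} {g : (Fin m → ℝ) → ℝ} (hg : ContDiff ℝ n g)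
    (hb : ∀ j ≤ n, ∀ x, ‖iteratedFDeriv ℝ j g x‖ ≤ M)
    (α : Fin m → ℕ) (hα : (∑ i, α i) ≤ n) (x : Fin m → ℝ) :
    |mderivPi α g x| ≤ M := by
  have hsum : ((List.finRange m).map α).sum = ∑ i, α i :=
    (Fin.sum_univ_def α).symm
  set t := ((List.finRange m).map α).sum with ht
  have htn : t ≤ n := by rw [hsum]; exact hα
  have hk : (n - t) + t = n := by omega
  have hfold := pd_fold (List.finRange m) α (n - t) g
    (by rw [← ht, hk]; exact hg) (by rw [← ht, hk]; exact hb)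
  have h0 := hfold.2 0 (Nat.zero_le _) x
  rw [norm_iteratedFDeriv_zero, Real.norm_eq_abs] at h0
  exact h0

lemma affine_contDiff {m0 : ℕ} {ι : Type*} [Fintype ι] {N : WithTop ℕ∞}
    (f : ι → (Fin m0 → ℝ) → ℝ) (a : ι → ℝ) (c0 : ℝ)
    (hf : ∀ p, ContDiff ℝ N (f p)) :
    ContDiff ℝ N (fun y => (∑ p, a p * f p y) + c0) :=
  (ContDiff.sum fun p _ => contDiff_const.mul (hf p)).add contDiff_const

lemma affine_iter_bound {m0 : ℕ} {ι : Type*} [Fintype ι]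
    (f : ι → (Fin m0 → ℝ) → ℝ) (a : ι → ℝ) (c0 : ℝ) {i : ℕ} (hi : 1 ≤ i)
    (hf : ∀ p, ContDiff ℝ i (f p)) {B R : ℝ} (hR : 0 ≤ R)
    (ha : ∀ p, |a p| ≤ R) (hfb : ∀ p x, ‖iteratedFDeriv ℝ i (f p) x‖ ≤ B)
    (x : Fin m0 → ℝ) :
    ‖iteratedFDeriv ℝ i (fun y => (∑ p, a p * f p y) + c0) x‖
      ≤ (Fintype.card ι : ℝ) * (R * B) := by
  have hsmooth : ContDiff ℝ i fun y => ∑ p, a p * f p y :=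
    ContDiff.sum fun p _ => contDiff_const.mul (hf p)
  have h1 : iteratedFDeriv ℝ i (fun y => (∑ p, a p * f p y) + c0) x
      = iteratedFDeriv ℝ i (fun y => ∑ p, a p * f p y) x
        + iteratedFDeriv ℝ i (fun _ => c0) x :=
    iteratedFDeriv_add_apply hsmooth.contDiffAt contDiff_const.contDiffAt
  rw [h1, iteratedFDeriv_const_of_ne (by omega), Pi.zero_apply, add_zero]
  have h2 : iteratedFDeriv ℝ i (fun y => ∑ p, a p * f p y)
      = ∑ p, iteratedFDeriv ℝ i (fun y => a p * f p y) :=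
    iteratedFDeriv_sum fun p _ => contDiff_const.mul (hf p)
  rw [h2]
  have h3 : ∀ p, ‖iteratedFDeriv ℝ i (fun y => a p * f p y) x‖ ≤ R * B := by
    intro p
    have he : (fun y => a p * f p y) = a p • f p := rfl
    rw [he, iteratedFDeriv_const_smul_apply (hf p).contDiffAt,
      norm_smul (a p) (iteratedFDeriv ℝ i (f p) x), Real.norm_eq_abs]
    exact mul_le_mul (ha p) (hfb p x) (norm_nonneg _) hR
  calc ‖(∑ p, iteratedFDeriv ℝ i (fun y => a p * f p y)) x‖
      = ‖∑ p, iteratedFDeriv ℝ i (fun y => a p * f p y) x‖ := by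
        rw [Finset.sum_apply]
    _ ≤ ∑ p : ι, ‖iteratedFDeriv ℝ i (fun y => a p * f p y) x‖ :=
        norm_sum_le _ _
    _ ≤ ∑ _p : ι, R * B := Finset.sum_le_sum fun p _ => h3 p
    _ = (Fintype.card ι : ℝ) * (R * B) := by
        rw [Finset.sum_const, nsmul_eq_mul, Finset.card_univ]

lemma coord_iter_bound {m0 : ℕ} (j : Fin m0) {i : ℕ} (hi : 1 ≤ i)
    (x : Fin m0 → ℝ) :
    ‖iteratedFDeriv ℝ i (fun y : Fin m0 → ℝ => y j) x‖ ≤ 1 := by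
  obtain ⟨i', rfl⟩ : ∃ i', i = i' + 1 := ⟨i - 1, by omega⟩
  have hproj : (fun y : Fin m0 → ℝ => y j)
      = (ContinuousLinearMap.proj j : ((Fin m0) → ℝ) →L[ℝ] ℝ) := rfl
  rw [hproj, ← norm_iteratedFDeriv_fderiv]
  have hfd : (fderiv ℝ (ContinuousLinearMap.proj j :
      ((Fin m0) → ℝ) →L[ℝ] ℝ)) = fun _ =>
        (ContinuousLinearMap.proj j : ((Fin m0) → ℝ) →L[ℝ] ℝ) :=
    funext fun y => ContinuousLinearMap.fderiv _
  rw [hfd]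
  match i' with
  | 0 =>
    rw [norm_iteratedFDeriv_zero]
    refine ContinuousLinearMap.opNorm_le_bound _ zero_le_one fun y => ?_
    simpa using norm_le_pi_norm y j
  | i'' + 1 =>
    rw [iteratedFDeriv_const_of_ne (by omega)]
    simp

end DeepAux

/-- Theorem (bound on the derivatives of a deep neural network, De Ryck et al.):
for a depth-`L` network `u_θ = A_L ∘ (σ ∘ A_{L-1}) ∘ ⋯ ∘ (σ ∘ A₁)` with widths `≤ W`,
entries in `[-R, R]` and `‖σ‖_{C^n} ≥ 1`, every component and every classical partial
derivative of order `≤ n` on `[0,1]^{d+1}` is bounded by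
`16^L (d+1)^{2n} (e² n⁴ W³ Rⁿ ‖σ‖_{C^n})^{nL}`. -/
theorem deep_network_derivative_bound
    (d n L W : ℕ) (hn : 1 ≤ n) (hL : 2 ≤ L) (hW : 1 ≤ W)
    (R : ℝ) (hR : 1 ≤ R)
    (σ : ℝ → ℝ) (hσ : ContDiff ℝ n σ)
    (Cσ : ℝ)
    (hCσdef : Cσ = sSup {r : ℝ | ∃ j ≤ n, ∃ s : ℝ, r = |iteratedDeriv j σ s|})
    (hCσbdd : BddAbove {r : ℝ | ∃ j ≤ n, ∃ s : ℝ, r = |iteratedDeriv j σ s|})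
    (hCσ1 : 1 ≤ Cσ)
    (l : ℕ → ℕ) (hl0 : l 0 = d + 1)
    (hlW : ∀ i ≤ L, l i ≤ W)
    (A : ∀ i : ℕ, Matrix (Fin (l (i + 1))) (Fin (l i)) ℝ)
    (bv : ∀ i : ℕ, Fin (l (i + 1)) → ℝ)
    (hA : ∀ i < L, ∀ (j : Fin (l (i + 1))) (k : Fin (l i)), |A i j k| ≤ R)
    (hb : ∀ i < L, ∀ j : Fin (l (i + 1)), |bv i j| ≤ R) :
    ∀ (j : Fin (l (L - 1 + 1))) (α : Fin (l 0) → ℕ), (∑ i, α i) ≤ n →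
      ∀ x ∈ Icc (0 : Fin (l 0) → ℝ) 1,
        |mderivPi α
            (fun y => (A (L - 1)).mulVec (fwd σ l A bv (L - 1) y) j + bv (L - 1) j) x|
          ≤ 16 ^ L * ((d : ℝ) + 1) ^ (2 * n) *
              (Real.exp 1 ^ 2 * (n : ℝ) ^ 4 * (W : ℝ) ^ 3 * R ^ n * Cσ) ^ (n * L) := by
  intro j α hα x hx
  have hn' : (1:ℝ) ≤ (n:ℝ) := by exact_mod_cast hn
  have hW' : (1:ℝ) ≤ (W:ℝ) := by exact_mod_cast hW
  have hR0 : (0:ℝ) ≤ R := le_trans zero_le_one hR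
  have hCσ0 : (0:ℝ) ≤ Cσ := le_trans zero_le_one hCσ1
  -- bounds on σ and its derivatives
  have hσb : ∀ i ≤ n, ∀ s : ℝ, ‖iteratedFDeriv ℝ i σ s‖ ≤ Cσ := by
    intro i hi s
    rw [norm_iteratedFDeriv_eq_norm_iteratedDeriv, Real.norm_eq_abs, hCσdef]
    exact le_csSup hCσbdd ⟨i, hi, s, rfl⟩
  have hσv : ∀ s : ℝ, |σ s| ≤ Cσ := by
    intro s
    have h0 := hσb 0 (Nat.zero_le n) s
    rwa [norm_iteratedFDeriv_zero, Real.norm_eq_abs] at h0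
  set c : ℝ := (n : ℝ) * Cσ * (W : ℝ) * R with hc
  have hmul1 : ∀ a b : ℝ, 1 ≤ a → 1 ≤ b → 1 ≤ a * b := fun a b ha hb =>
    le_trans ha (le_mul_of_one_le_right (le_trans zero_le_one ha) hb)
  have hc1 : (1:ℝ) ≤ c := by
    rw [hc]; exact hmul1 _ _ (hmul1 _ _ (hmul1 _ _ hn' hCσ1) hW') hR
  have hc0 : (0:ℝ) ≤ c := le_trans zero_le_one hc1
  have hWR1 : (1:ℝ) ≤ (W:ℝ) * R := hmul1 _ _ hW' hR
  have hWR0 : (0:ℝ) ≤ (W:ℝ) * R := le_trans zero_le_one hWR1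
  -- main layer induction
  have key : ∀ k, k ≤ L → ∀ j' : Fin (l k),
      ContDiff ℝ n (fun y => fwd σ l A bv k y j') ∧
      ∀ i, 1 ≤ i → i ≤ n → ∀ z : Fin (l 0) → ℝ,
        ‖iteratedFDeriv ℝ i (fun y => fwd σ l A bv k y j') z‖ ≤ (c ^ k) ^ i := by
    intro k
    induction k with
    | zero =>
      intro _ j'
      have hfwd0 : fwd σ l A bv 0 = fun x => x := rfl
      constructor
      · simp only [hfwd0]
        exact (ContinuousLinearMap.proj j' : ((Fin (l 0)) → ℝ) →L[ℝ] ℝ).contDiff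
      · intro i hi1 _ z
        simp only [hfwd0, pow_zero, one_pow]
        exact DeepAux.coord_iter_bound j' hi1 z

    | succ k ih =>
      intro hk j'
      have ihk := ih (by omega)
      have hck : (1:ℝ) ≤ c ^ k := one_le_pow₀ hc1
      have hck0 : (0:ℝ) ≤ c ^ k := le_trans zero_le_one hck
      have hinner_smooth : ContDiff ℝ n
          (fun y => (∑ p, A k j' p * fwd σ l A bv k y p) + bv k j') :=
        DeepAux.affine_contDiff _ _ _ (fun p => (ihk p).1)
      have hcomp : (fun y => fwd σ l A bv (k+1) y j')
          = σ ∘ (fun y => (∑ p, A k j' p * fwd σ l A bv k y p) + bv k j') := by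
        funext y
        show σ ((A k).mulVec (fwd σ l A bv k y) j' + bv k j') = _
        simp [Matrix.mulVec, dotProduct, Function.comp]
      constructor
      · rw [hcomp]; exact hσ.comp hinner_smooth
      · intro i hi1 hin z
        rw [hcomp]
        have hD : ∀ i', 1 ≤ i' → i' ≤ i →
            ‖iteratedFDeriv ℝ i'
              (fun y => (∑ p, A k j' p * fwd σ l A bv k y p) + bv k j') z‖
            ≤ ((W:ℝ) * R * c ^ k) ^ i' := by
          intro i' h1 h2
          have hble := DeepAux.affine_iter_bound (fun p y => fwd σ l A bv k y p)
            (fun p => A k j' p) (bv k j') h1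
            (fun p => ((ihk p).1).of_le (by exact_mod_cast le_trans h2 hin))
            hR0 (fun p => hA k (by omega) j' p)
            (fun p z' => (ihk p).2 i' h1 (le_trans h2 hin) z') z
          refine le_trans hble ?_
          have hcard : (Fintype.card (Fin (l k)) : ℝ) ≤ (W:ℝ) := by
            simp only [Fintype.card_fin]
            exact_mod_cast hlW k (by omega)
          calc (Fintype.card (Fin (l k)) : ℝ) * (R * (c ^ k) ^ i')
              ≤ (W:ℝ) * (R * (c ^ k) ^ i') := by
                apply mul_le_mul_of_nonneg_right hcard; positivity
            _ = (W:ℝ) * R * (c ^ k) ^ i' := by ring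
            _ ≤ ((W:ℝ) * R) ^ i' * (c ^ k) ^ i' := by
                apply mul_le_mul_of_nonneg_right (le_self_pow₀ hWR1 (by omega))
                positivity
            _ = ((W:ℝ) * R * c ^ k) ^ i' := (mul_pow _ _ _).symm
        have hcompbd := norm_iteratedFDeriv_comp_le hσ hinner_smooth
          (by exact_mod_cast hin) z (fun i' hi' => hσb i' (le_trans hi' hin) _) hD
        refine le_trans hcompbd ?_ 
        have hfact : (i.factorial : ℝ) ≤ (n:ℝ) ^ i := by
          calc (i.factorial : ℝ) ≤ ((i:ℕ):ℝ) ^ i := by exact_mod_cast Nat.factorial_le_pow i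
            _ ≤ (n:ℝ) ^ i := by
              apply pow_le_pow_left₀ (by positivity)
              exact_mod_cast hin
        have hCσi : Cσ ≤ Cσ ^ i := le_self_pow₀ hCσ1 (by omega)
        calc (i.factorial : ℝ) * Cσ * ((W:ℝ) * R * c ^ k) ^ i
            ≤ (n:ℝ) ^ i * Cσ ^ i * ((W:ℝ) * R * c ^ k) ^ i := by
              apply mul_le_mul_of_nonneg_right _ (by positivity)
              exact mul_le_mul hfact hCσi hCσ0 (by positivity)
          _ = ((n:ℝ) * Cσ * ((W:ℝ) * R * c ^ k)) ^ i := by ring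
          _ = (c ^ (k+1)) ^ i := by
              have hbase : (n:ℝ) * Cσ * ((W:ℝ) * R * c ^ k) = c ^ (k+1) := by
                rw [hc, pow_succ]; ring
              rw [hbase]


  -- value bound for layers ≥ 1
  have hval : ∀ k, 1 ≤ k → ∀ (y : Fin (l 0) → ℝ) (p : Fin (l k)),
      |fwd σ l A bv k y p| ≤ Cσ := by
    intro k hk y p
    cases k with
    | zero => exact absurd hk (by omega)
    | succ k => exact hσv _
  have hkey := key (L - 1) (by omega)
  set F : (Fin (l 0) → ℝ) → ℝ :=
    fun y => (A (L - 1)).mulVec (fwd σ l A bv (L - 1) y) j + bv (L - 1) j with hF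
  have hFeq : F = fun y =>
      (∑ p, A (L - 1) j p * fwd σ l A bv (L - 1) y p) + bv (L - 1) j := by
    funext y
    simp [hF, Matrix.mulVec, dotProduct]
  have hFsmooth : ContDiff ℝ n F := by
    rw [hFeq]
    exact DeepAux.affine_contDiff _ _ _ (fun p => (hkey p).1)
  have hlL1W : ((l (L-1) : ℕ) : ℝ) ≤ (W:ℝ) := by exact_mod_cast hlW (L-1) (by omega)
  have hcL1 : (1:ℝ) ≤ c ^ (L-1) := one_le_pow₀ hc1
  have hWRc1 : (1:ℝ) ≤ (W:ℝ) * R * c ^ (L-1) := hmul1 _ _ hWR1 hcL1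
  have hWRc0 : (0:ℝ) ≤ (W:ℝ) * R * c ^ (L-1) := le_trans zero_le_one hWRc1
  set M : ℝ := (W:ℝ) * R * Cσ + R + ((W:ℝ) * R * c ^ (L-1)) ^ n with hM
  have hFbound : ∀ i ≤ n, ∀ z : Fin (l 0) → ℝ, ‖iteratedFDeriv ℝ i F z‖ ≤ M := by
    intro i hi z
    rcases Nat.eq_zero_or_pos i with h0 | h1
    · subst h0
      rw [norm_iteratedFDeriv_zero, Real.norm_eq_abs, hFeq]
      have hpow0 : (0:ℝ) ≤ ((W:ℝ) * R * c ^ (L-1)) ^ n := by positivity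
      calc |(∑ p, A (L - 1) j p * fwd σ l A bv (L - 1) z p) + bv (L - 1) j|
          ≤ |∑ p, A (L - 1) j p * fwd σ l A bv (L - 1) z p| + |bv (L - 1) j| :=
            abs_add_le _ _
        _ ≤ (∑ p, |A (L - 1) j p * fwd σ l A bv (L - 1) z p|) + R :=
            add_le_add (Finset.abs_sum_le_sum_abs _ _) (hb (L-1) (by omega) j)
        _ ≤ (∑ _p : Fin (l (L-1)), R * Cσ) + R := by
            refine add_le_add_left (Finset.sum_le_sum fun p _ => ?_) R
            rw [abs_mul]
            exact mul_le_mul (hA (L-1) (by omega) j p)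
              (hval (L-1) (by omega) z p) (abs_nonneg _) hR0
        _ = ((l (L-1) : ℕ) : ℝ) * (R * Cσ) + R := by
            rw [Finset.sum_const, nsmul_eq_mul, Finset.card_univ, Fintype.card_fin]
        _ ≤ (W:ℝ) * (R * Cσ) + R := by
            refine add_le_add_left (mul_le_mul_of_nonneg_right hlL1W ?_) R
            positivity
        _ ≤ M := by
            rw [hM]
            have hrw : (W:ℝ) * (R * Cσ) = (W:ℝ) * R * Cσ := by ring
            linarith
    · rw [hFeq]
      have hble := DeepAux.affine_iter_bound (fun p y => fwd σ l A bv (L-1) y p)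
        (fun p => A (L-1) j p) (bv (L-1) j) h1
        (fun p => ((hkey p).1).of_le (by exact_mod_cast hi))
        hR0 (fun p => hA (L-1) (by omega) j p)
        (fun p z' => (hkey p).2 i h1 hi z') z
      refine le_trans hble ?_
      calc (Fintype.card (Fin (l (L-1))) : ℝ) * (R * (c ^ (L-1)) ^ i)
          ≤ (W:ℝ) * (R * (c ^ (L-1)) ^ i) := by
            apply mul_le_mul_of_nonneg_right _ (by positivity)
            simp only [Fintype.card_fin]; exact hlL1W
        _ = (W:ℝ) * R * (c ^ (L-1)) ^ i := by ring
        _ ≤ ((W:ℝ) * R) ^ i * (c ^ (L-1)) ^ i := by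
            apply mul_le_mul_of_nonneg_right (le_self_pow₀ hWR1 (by omega))
            positivity
        _ = ((W:ℝ) * R * c ^ (L-1)) ^ i := (mul_pow _ _ _).symm
        _ ≤ ((W:ℝ) * R * c ^ (L-1)) ^ n := pow_le_pow_right₀ hWRc1 hi
        _ ≤ M := by
            rw [hM]
            have h1 : (0:ℝ) ≤ (W:ℝ) * R * Cσ := mul_nonneg hWR0 hCσ0
            linarith
  have hmain := DeepAux.mderiv_bound hFsmooth hFbound α hα x
  refine le_trans hmain ?_
  -- final arithmetic:  M ≤ 16^L (d+1)^{2n} G^{nL}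
  set G : ℝ := Real.exp 1 ^ 2 * (n : ℝ) ^ 4 * (W : ℝ) ^ 3 * R ^ n * Cσ with hG
  have he2 : (1:ℝ) ≤ Real.exp 1 ^ 2 := one_le_pow₀ (Real.one_le_exp zero_le_one)
  have hn4 : (n:ℝ) ≤ (n:ℝ) ^ 4 := le_self_pow₀ hn' (by norm_num)
  have hW3 : (W:ℝ) ≤ (W:ℝ) ^ 3 := le_self_pow₀ hW' (by norm_num)
  have hRn : R ≤ R ^ n := le_self_pow₀ hR (by omega)
  have hn40 : (0:ℝ) ≤ (n:ℝ) ^ 4 := by positivity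
  have hG1 : (1:ℝ) ≤ G := by
    rw [hG]
    have h1 : (1:ℝ) ≤ (n:ℝ) ^ 4 := le_trans hn' hn4
    have h2 : (1:ℝ) ≤ (W:ℝ) ^ 3 := le_trans hW' hW3
    have h3 : (1:ℝ) ≤ R ^ n := le_trans hR hRn
    exact hmul1 _ _ (hmul1 _ _ (hmul1 _ _ (hmul1 _ _ he2 h1) h2) h3) hCσ1
  have hG0 : (0:ℝ) ≤ G := le_trans zero_le_one hG1
  have hcG : c ≤ G := by
    have h1 : (n:ℝ) * (W:ℝ) * R * Cσ ≤ (n:ℝ)^4 * (W:ℝ)^3 * R^n * Cσ := by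
      refine mul_le_mul_of_nonneg_right ?_ hCσ0
      refine mul_le_mul (mul_le_mul hn4 hW3 (by linarith) hn40) hRn hR0 (by positivity)
    have h2 : (n:ℝ)^4 * (W:ℝ)^3 * R^n * Cσ
        ≤ Real.exp 1 ^ 2 * ((n:ℝ)^4 * (W:ℝ)^3 * R^n * Cσ) := by
      refine le_mul_of_one_le_left ?_ he2
      have : (0:ℝ) ≤ (n:ℝ)^4 * (W:ℝ)^3 * R^n := by positivity
      exact mul_nonneg this hCσ0
    calc c = (n:ℝ) * (W:ℝ) * R * Cσ := by rw [hc]; ring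
      _ ≤ (n:ℝ)^4 * (W:ℝ)^3 * R^n * Cσ := h1
      _ ≤ Real.exp 1 ^ 2 * ((n:ℝ)^4 * (W:ℝ)^3 * R^n * Cσ) := h2
      _ = G := by rw [hG]; ring
  have hWRCσG : (W:ℝ) * R * Cσ ≤ G := by
    have h1 : (W:ℝ) * R * Cσ ≤ (W:ℝ)^3 * R^n * Cσ := by
      refine mul_le_mul_of_nonneg_right ?_ hCσ0
      exact mul_le_mul hW3 hRn hR0 (by positivity)
    have h2 : (W:ℝ)^3 * R^n * Cσ ≤ Real.exp 1 ^ 2 * (n:ℝ)^4 * ((W:ℝ)^3 * R^n * Cσ) := by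
      refine le_mul_of_one_le_left ?_ ?_
      · have : (0:ℝ) ≤ (W:ℝ)^3 * R^n := by positivity
        exact mul_nonneg this hCσ0
      · exact hmul1 _ _ he2 (le_trans hn' hn4)
    calc (W:ℝ) * R * Cσ ≤ (W:ℝ)^3 * R^n * Cσ := h1
      _ ≤ Real.exp 1 ^ 2 * (n:ℝ)^4 * ((W:ℝ)^3 * R^n * Cσ) := h2
      _ = G := by rw [hG]; ring
  have hWRG : (W:ℝ) * R ≤ G :=
    le_trans (le_mul_of_one_le_right hWR0 hCσ1) hWRCσG
  have hRG : R ≤ G :=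
    le_trans (le_mul_of_one_le_left hR0 hW') hWRG
  have hfin : (W:ℝ) * R * c ^ (L-1) ≤ G ^ L := by
    calc (W:ℝ) * R * c ^ (L-1) ≤ G * G ^ (L-1) :=
        mul_le_mul hWRG (pow_le_pow_left₀ hc0 hcG (L-1)) (by positivity) hG0
      _ = G ^ (L - 1 + 1) := (pow_succ' G (L-1)).symm
      _ = G ^ L := by congr 1; omega
  have hnL0 : n * L ≠ 0 := by positivity
  have hfinn : ((W:ℝ) * R * c ^ (L-1)) ^ n ≤ G ^ (n * L) := by
    calc ((W:ℝ) * R * c ^ (L-1)) ^ n ≤ (G ^ L) ^ n :=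
        pow_le_pow_left₀ hWRc0 hfin n
      _ = G ^ (n * L) := by rw [← pow_mul, Nat.mul_comm]
  have hGnL1 : (1:ℝ) ≤ G ^ (n * L) := one_le_pow₀ hG1
  have hGnL0 : (0:ℝ) ≤ G ^ (n * L) := le_trans zero_le_one hGnL1
  have e1 : (W:ℝ) * R * Cσ ≤ G ^ (n * L) :=
    le_trans hWRCσG (le_self_pow₀ hG1 hnL0)
  have e2 : R ≤ G ^ (n * L) := le_trans hRG (le_self_pow₀ hG1 hnL0)
  have hM3 : M ≤ 3 * G ^ (n * L) := by rw [hM]; linarith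
  have h16 : (3:ℝ) ≤ 16 ^ L := by
    calc (3:ℝ) ≤ 16 ^ 2 := by norm_num
      _ ≤ 16 ^ L := pow_le_pow_right₀ (by norm_num) hL
  have hd1 : (1:ℝ) ≤ ((d:ℝ) + 1) ^ (2 * n) := by
    apply one_le_pow₀
    have : (0:ℝ) ≤ (d:ℝ) := Nat.cast_nonneg d
    linarith
  calc M ≤ 3 * G ^ (n * L) := hM3
    _ ≤ (16 ^ L * ((d:ℝ) + 1) ^ (2 * n)) * G ^ (n * L) := by
        refine mul_le_mul_of_nonneg_right ?_ hGnL0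
        calc (3:ℝ) ≤ 16 ^ L := h16
          _ = 16 ^ L * 1 := (mul_one _).symm
          _ ≤ 16 ^ L * ((d:ℝ) + 1) ^ (2 * n) := by
              refine mul_le_mul_of_nonneg_left hd1 ?_
              positivity
    _ = 16 ^ L * ((d:ℝ) + 1) ^ (2 * n) * G ^ (n * L) := by ring
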